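/- Let α ∈ S_n be a permutation whose disjoint nontrivial cycle factors have pairwise distinct lengths. Then the centralizer of α in S_n is the internal direct product of the cyclic groups generated by the cycle factors of α together with the pointwise stabilizer group of M(α) (the symmetric group on the fixed points of α). -/

import Mathlib

open Equiv Equiv.Perm

private lemma prod_fix' {β : Type*} (l : List (Equiv.Perm β)) (v : β)
    (h : ∀ g ∈ l, g v = v) : l.prod v = v := by
  induction l with
  | nil => simp
  | cons g t ih =>
    rw [List.prod_cons, Equiv.Perm.mul_apply,
      ih (fun g hg => h g (List.mem_cons_of_mem _ hg)), h g List.mem_cons_self]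

private lemma prod_ofFn_apply' {β : Type*} :
    ∀ (k : ℕ) (b : Fin k → Equiv.Perm β) (i : Fin k) (v : β),
    (∀ j, j < i → b j (b i v) = b i v) → (∀ j, i < j → b j v = v) →
    (List.ofFn b).prod v = b i v := by
  intro k
  induction k with
  | zero => exact fun b i => i.elim0
  | succ k ih =>
    intro b i v h1 h2
    rw [List.ofFn_succ, List.prod_cons, Equiv.Perm.mul_apply]
    rcases Fin.eq_zero_or_eq_succ i with rfl | ⟨i', rfl⟩
    · rw [prod_fix']
      intro g hg
      rw [List.mem_ofFn] at hg
      obtain ⟨j, rfl⟩ := hg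
      exact h2 _ (Fin.succ_pos j)
    · rw [ih (fun j => b j.succ) i' v
        (fun j hj => h1 j.succ (by simpa using hj))
        (fun j hj => h2 j.succ (by simpa using hj))]
      exact h1 0 (Fin.succ_pos i')

/-- If the disjoint nontrivial cycle factors of α have pairwise distinct lengths,
then the centralizer of α is the internal direct product of the cyclic groups
generated by the factors and the symmetric group on the fixed points of α:
every centralizing element is uniquely a product (∏ powers of the factors) · b
with b supported off M(α). -/
theorem stmt_18 {n k : ℕ} (a : Fin k → Equiv.Perm (Fin n))
    (hcyc : ∀ i, (a i).IsCycle)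
    (hdisj : ∀ i j, i ≠ j → (a i).Disjoint (a j))
    (hlen : ∀ i j, i ≠ j → (a i).support.card ≠ (a j).support.card)
    (α : Equiv.Perm (Fin n)) (hα : α = (List.ofFn a).prod) :
    ∀ x : Equiv.Perm (Fin n),
      x ∈ Subgroup.centralizer ({α} : Set (Equiv.Perm (Fin n))) ↔
      ∃! p : (Fin k → Equiv.Perm (Fin n)) × Equiv.Perm (Fin n),
        (∀ i, p.1 i ∈ Subgroup.zpowers (a i)) ∧
        Disjoint p.2.support α.support ∧
        x = (List.ofFn p.1).prod * p.2 := by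
  classical
  have hpd : ∀ {i j : Fin k}, i ≠ j → Disjoint (a i).support (a j).support :=
    fun h => Equiv.Perm.disjoint_iff_disjoint_support.mp (hdisj _ _ h)
  have hfix : ∀ {i j : Fin k}, j ≠ i → ∀ w ∈ (a i).support, a j w = w := by
    intro i j hij w hw
    exact Equiv.Perm.notMem_support.mp (Finset.disjoint_right.mp (hpd hij) hw)
  -- products over lists of perms supported in the a-supports
  have hprod : ∀ (b' : Fin k → Equiv.Perm (Fin n)),
      (∀ j, (b' j).support ⊆ (a j).support) →
      ∀ i v, v ∈ (a i).support → (List.ofFn b').prod v = b' i v := by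
    intro b' hb' i v hv
    have key : ∀ j : Fin k, j ≠ i → ∀ w, (w = v ∨ w = b' i v) → b' j w = w := by
      intro j hj w hw
      apply Equiv.Perm.notMem_support.mp
      intro hmem
      have : w ∈ (a i).support := by
        rcases hw with rfl | rfl
        · exact hv
        · by_cases hbv : b' i v = v
          · rwa [hbv]
          · exact hb' i ((Equiv.Perm.apply_mem_support).mpr
              (Equiv.Perm.mem_support.mpr hbv))
      exact Finset.disjoint_right.mp (hpd hj) this (hb' j hmem)
    exact prod_ofFn_apply' k b' i v
      (fun j hj => key j (ne_of_lt hj) _ (Or.inr rfl))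
      (fun j hj => key j (ne_of_gt hj) _ (Or.inl rfl))
  have happ : ∀ (i) (v), v ∈ (a i).support → α v = a i v := by
    intro i v hv
    rw [hα]
    apply hprod a (fun j => le_refl _) i v hv
  have hsm : ∀ i v, v ∈ (a i).support → v ∈ α.support := fun i v hv =>
    Equiv.Perm.mem_support.mpr (by rw [happ i v hv]; exact Equiv.Perm.mem_support.mp hv)
  have hms : ∀ v, v ∈ α.support → ∃ i, v ∈ (a i).support := by
    intro v hv
    by_contra h
    push_neg at h
    apply Equiv.Perm.mem_support.mp hv
    rw [hα]
    apply prod_fix'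
    intro g hg
    rw [List.mem_ofFn] at hg
    obtain ⟨j, rfl⟩ := hg
    exact Equiv.Perm.notMem_support.mp (h j)
  intro x
  constructor
  · intro hx
    have hcom : Commute x α := ((Subgroup.mem_centralizer_iff.mp hx) α rfl).symm
    -- x commutes with each a i
    have hafac : ∀ i, a i ∈ α.cycleFactorsFinset := fun i =>
      Equiv.Perm.mem_cycleFactorsFinset_iff.mpr
        ⟨hcyc i, fun v hv => (happ i v hv).symm⟩
    have hcommi : ∀ i, Commute x (a i) := by
      intro i
      set τ : Equiv.Perm (Fin n) := x * a i * x⁻¹ with hτ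
      have hτapp : ∀ w, τ (x w) = x (a i w) := by
        intro w; simp [hτ, Equiv.Perm.mul_apply]
      have hτfac : τ ∈ α.cycleFactorsFinset := by
        apply Equiv.Perm.mem_cycleFactorsFinset_iff.mpr
        refine ⟨(hcyc i).conj, ?_⟩
        intro v hv
        have hv' : v ∈ (a i).support.map x.toEmbedding := by
          rw [← Equiv.Perm.support_conj]; exact hv
        obtain ⟨u, hu, rfl⟩ := Finset.mem_map.mp hv'
        simp only [Equiv.toEmbedding_apply]
        have hax : α (x u) = x (α u) := by
          rw [← Equiv.Perm.mul_apply, ← Equiv.Perm.mul_apply, ← hcom.eq]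
        rw [hτapp u, hax, happ i u hu]
      obtain ⟨u, hu⟩ := (hcyc i).nonempty_support
      have hxu : x u ∈ τ.support := by
        rw [Equiv.Perm.mem_support, hτapp u]
        intro h
        exact Equiv.Perm.mem_support.mp hu (x.injective h)
      obtain ⟨j, hj⟩ := hms (x u) (Equiv.Perm.mem_cycleFactorsFinset_support_le hτfac hxu)
      have hτj : τ = a j := by
        rw [Equiv.Perm.cycle_is_cycleOf hxu hτfac,
          ← Equiv.Perm.cycle_is_cycleOf hj (hafac j)]
      have hcards : (a j).support.card = (a i).support.card := by
        rw [← hτj, hτ, Equiv.Perm.card_support_conj]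
      have hij : j = i := by
        by_contra hne
        exact hlen j i hne hcards
      have : x * a i * x⁻¹ = a i := by rw [← hτ, hτj, hij]
      have := congrArg (· * x) this
      exact (by simpa [mul_assoc] using this : x * a i = a i * x)
    -- x preserves each support
    have hxs : ∀ i v, v ∈ (a i).support → x v ∈ (a i).support := by
      intro i v hv
      rw [Equiv.Perm.mem_support] at hv ⊢
      intro h
      apply hv
      apply x.injective
      have : x (a i v) = a i (x v) := by
        rw [← Equiv.Perm.mul_apply, ← Equiv.Perm.mul_apply, (hcommi i).eq]
      rw [this, h]
    -- choose base points and exponents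
    choose u hu using fun i => (hcyc i).nonempty_support
    choose z hz using fun i => (hcyc i).sameCycle
      (Equiv.Perm.mem_support.mp (hu i))
      (Equiv.Perm.mem_support.mp (hxs i (u i) (hu i)))
    set b : Fin k → Equiv.Perm (Fin n) := fun i => a i ^ z i with hbdef
    have hbsupp : ∀ i, (b i).support ⊆ (a i).support := fun i =>
      Equiv.Perm.support_zpow_le (a i) (z i)
    have hbx : ∀ i v, v ∈ (a i).support → b i v = x v := by
      intro i v hv
      obtain ⟨t, ht⟩ := (hcyc i).sameCycle
        (Equiv.Perm.mem_support.mp (hu i)) (Equiv.Perm.mem_support.mp hv)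
      have hc1 : Commute x (a i ^ t) := (hcommi i).zpow_right t
      calc b i v = (a i ^ z i) ((a i ^ t) (u i)) := by rw [ht]
        _ = (a i ^ t) ((a i ^ z i) (u i)) := by
            rw [← Equiv.Perm.mul_apply, ← Equiv.Perm.mul_apply, zpow_mul_comm]
        _ = (a i ^ t) (x (u i)) := by rw [hz i]
        _ = x ((a i ^ t) (u i)) := by
            rw [← Equiv.Perm.mul_apply, ← Equiv.Perm.mul_apply, hc1.eq]
        _ = x v := by rw [ht]
    set c : Equiv.Perm (Fin n) := (List.ofFn b).prod⁻¹ * x with hcdef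
    have hcv : ∀ v, v ∈ α.support → c v = v := by
      intro v hv
      obtain ⟨i, hi⟩ := hms v hv
      have : (List.ofFn b).prod v = x v := by
        rw [hprod b hbsupp i v hi, hbx i v hi]
      simp [hcdef, Equiv.Perm.mul_apply, ← this]
    refine ⟨⟨b, c⟩, ⟨fun i => ⟨z i, rfl⟩, ?_, by simp [hcdef]⟩, ?_⟩
    · rw [Finset.disjoint_left]
      intro v hvc hvα
      exact Equiv.Perm.mem_support.mp hvc (hcv v hvα)
    · rintro ⟨b', c'⟩ ⟨h1, h2, h3⟩
      dsimp only at h1 h2 h3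
      have hb'supp : ∀ j, (b' j).support ⊆ (a j).support := by
        intro j
        obtain ⟨t, ht⟩ := Subgroup.mem_zpowers_iff.mp (h1 j)
        rw [← ht]
        exact Equiv.Perm.support_zpow_le (a j) t
      have hbb : b' = b := by
        funext i
        apply Equiv.ext
        intro v
        by_cases hv : v ∈ (a i).support
        · have hc'v : c' v = v := by
            apply Equiv.Perm.notMem_support.mp
            exact fun hmem => Finset.disjoint_left.mp h2 hmem (hsm i v hv)
          have : x v = b' i v := by
            rw [h3, Equiv.Perm.mul_apply, hc'v, hprod b' hb'supp i v hv]
          rw [← this, hbx i v hv]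
        · rw [Equiv.Perm.notMem_support.mp (fun hm => hv (hb'supp i hm)),
            Equiv.Perm.notMem_support.mp (fun hm => hv (hbsupp i hm))]
      simp only [Prod.mk.injEq]
      refine ⟨hbb, ?_⟩
      rw [hcdef, ← hbb, h3]
      group
  · rintro ⟨⟨b', c'⟩, ⟨h1, h2, h3⟩, -⟩
    dsimp only at h1 h2 h3
    rw [Subgroup.mem_centralizer_iff]
    intro g hg
    rw [Set.mem_singleton_iff] at hg
    rw [hg]
    have hcommα : ∀ j, Commute (a j) α := by
      intro j
      rw [hα]
      apply Commute.list_prod_right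
      intro y hy
      rw [List.mem_ofFn] at hy
      obtain ⟨i, rfl⟩ := hy
      by_cases hij : j = i
      · subst hij; exact Commute.refl _
      · exact (hdisj j i hij).commute
    have h4 : Commute ((List.ofFn b').prod) α := by
      apply Commute.list_prod_left
      intro y hy
      rw [List.mem_ofFn] at hy
      obtain ⟨i, rfl⟩ := hy
      obtain ⟨t, ht⟩ := Subgroup.mem_zpowers_iff.mp (h1 i)
      rw [← ht]
      exact (hcommα i).zpow_left t
    have h5 : Commute c' α :=
      (Equiv.Perm.disjoint_iff_disjoint_support.mpr h2).commute
    have : Commute x α := by rw [h3]; exact h4.mul_left h5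
    exact this.symm.eq
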